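/- Let R be a resampling table and K a positive integer. If there exists a collectible witness DAG G compatible with R with |G| ≥ K nodes, then there exists a collectible witness DAG G' compatible with R with K ≤ |G'| ≤ 2K nodes. -/

import Mathlib

open scoped Classical

namespace LLL

/-- Two bad events are dependent iff their variable sets intersect. -/
def Dep {n : ℕ} {E : Type} (S : E → Finset (Fin n)) (b b' : E) : Prop :=
  (S b ∩ S b').Nonempty

/-- A finite directed graph with nodes labeled by bad events. -/
structure LGraph (E : Type) where
  V : Type
  fin : Fintype V
  label : V → E
  edge : V → V → Prop

attribute [instance] LGraph.fin

namespace LGraph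

variable {n : ℕ} {E : Type}

/-- A labeled digraph is a witness DAG: it is acyclic, any two nodes with
dependent labels are joined by an edge (in one direction), and nodes with
non-dependent labels have no edge. -/
def IsWDag (S : E → Finset (Fin n)) (G : LGraph E) : Prop :=
  (∀ v, ¬ Relation.TransGen G.edge v v) ∧
  (∀ v w, G.edge v w → Dep S (G.label v) (G.label w)) ∧
  (∀ v w : G.V, v ≠ w → Dep S (G.label v) (G.label w) → G.edge v w ∨ G.edge w v)

/-- A node is a sink if it has no outgoing edge. -/
def IsSink (G : LGraph E) (v : G.V) : Prop := ∀ w, ¬ G.edge v w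

/-- Induced subgraph on a set of vertices. -/
noncomputable def induce (G : LGraph E) (s : Set G.V) : LGraph E where
  V := s
  fin := (Set.toFinite s).fintype
  label := fun v => G.label v.1
  edge := fun v w => G.edge v.1 w.1

/-- The set of vertices having a directed path to at least one vertex of `s`. -/
def ReachSet (G : LGraph E) (s : Set G.V) : Set G.V :=
  {u | ∃ v ∈ s, Relation.ReflTransGen G.edge u v}

/-- Isomorphism of labeled digraphs. -/
def LIso (G H : LGraph E) : Prop :=
  ∃ e : G.V ≃ H.V, (∀ v, H.label (e v) = G.label v) ∧
    ∀ v w, H.edge (e v) (e w) ↔ G.edge v w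

/-- `G` is a prefix of `H`: `G` is (isomorphic to) the subgraph of `H` induced
on all vertices having a path to a given set of vertices. -/
def IsPrefix (G H : LGraph E) : Prop :=
  ∃ s : Set H.V, LIso G (H.induce (H.ReachSet s))

/-- The position of node v among the nodes with the same label (the number of
same-labeled nodes strictly preceding it). -/
noncomputable def pos (G : LGraph E) (v : G.V) : ℕ :=
  (Finset.univ.filter fun u => G.label u = G.label v ∧ Relation.TransGen G.edge u v).card

/-- The node v has extended label bk = (B, k). -/
def HasExt (G : LGraph E) (v : G.V) (bk : E × ℕ) : Prop :=
  G.label v = bk.1 ∧ G.pos v = bk.2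

/-- The extended label bk = (B, k) occurs in G. -/
def Occurs (G : LGraph E) (bk : E × ℕ) : Prop := ∃ v, G.HasExt v bk

/-- The number of nodes strictly preceding `v` whose label involves variable `i`. -/
noncomputable def vcount (S : E → Finset (Fin n)) (G : LGraph E) (i : Fin n) (v : G.V) : ℕ :=
  (Finset.univ.filter fun u => i ∈ S (G.label u) ∧ Relation.TransGen G.edge u v).card

/-- Position k of the path G[i] of variable i is occupied by a node labeled b. -/
def VOccurs (S : E → Finset (Fin n)) (G : LGraph E) (i : Fin n) (k : ℕ) (b : E) : Prop :=
  ∃ v, i ∈ S (G.label v) ∧ vcount S G i v = k ∧ G.label v = b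

/-- G[i] is an initial segment of G'[i] (as labeled ordered graphs). -/
def InitSeg (S : E → Finset (Fin n)) (G G' : LGraph E) (i : Fin n) : Prop :=
  ∀ k b, VOccurs S G i k b → VOccurs S G' i k b

/-- Witness DAGs G, G' are consistent: for each variable i, either G[i] is an
initial segment of G'[i] or vice versa. -/
def Consistent (S : E → Finset (Fin n)) (G G' : LGraph E) : Prop :=
  ∀ i : Fin n, InitSeg S G G' i ∨ InitSeg S G' G i

/-- The merge G ∨ G' of two witness DAGs: one node for each extended label
occurring in G or G', with an edge between two extended labels iff G or G' has
an edge between nodes with those extended labels. -/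
noncomputable def merge (G G' : LGraph E) : LGraph E where
  V := {bk : E × ℕ // G.Occurs bk ∨ G'.Occurs bk}
  fin := by
    have hsub : {bk : E × ℕ | G.Occurs bk ∨ G'.Occurs bk} ⊆
        (Set.range fun v : G.V => (G.label v, G.pos v)) ∪
        (Set.range fun v : G'.V => (G'.label v, G'.pos v)) := by
      rintro bk (⟨v, hv1, hv2⟩ | ⟨v, hv1, hv2⟩)
      · exact Or.inl ⟨v, by simp [hv1, hv2]⟩
      · exact Or.inr ⟨v, by simp [hv1, hv2]⟩
    exact (((Set.finite_range _).union (Set.finite_range _)).subset hsub).fintype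
  label := fun bk => bk.1.1
  edge := fun a b =>
    (∃ v w, G.HasExt v a.1 ∧ G.HasExt w b.1 ∧ G.edge v w) ∨
    (∃ v w, G'.HasExt v a.1 ∧ G'.HasExt w b.1 ∧ G'.edge v w)

/-- A witness DAG G is compatible with a resampling table R: for every node v,
the label of v is true on the configuration read off from R. -/
def Compat {Vl : Type} (S : E → Finset (Fin n)) (Ev : E → (Fin n → Vl) → Prop)
    (G : LGraph E) (R : Fin n → ℕ → Vl) : Prop :=
  ∀ v : G.V, Ev (G.label v) (fun i => R i (vcount S G i v))

/-- A witness DAG is collectible to b if b is dependent with the labels of all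
its sink nodes; it is collectible if it is collectible to some bad event. -/
def Collectible (S : E → Finset (Fin n)) (G : LGraph E) : Prop :=
  ∃ b : E, ∀ v, G.IsSink v → Dep S b (G.label v)

end LGraph

section Aux

open Relation LGraph

variable {n : ℕ} {E : Type} {S : E → Finset (Fin n)} {G : LGraph E}

lemma reach_closed (s : Set G.V) {a b : G.V} (e : G.edge a b) (hb : b ∈ G.ReachSet s) :
    a ∈ G.ReachSet s := by
  obtain ⟨t, ht, hp⟩ := hb
  exact ⟨t, ht, ReflTransGen.head e hp⟩

lemma mem_reach_self {s : Set G.V} {t : G.V} (ht : t ∈ s) : t ∈ G.ReachSet s :=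
  ⟨t, ht, ReflTransGen.refl⟩

lemma reach_mono {s s' : Set G.V} (h : s ⊆ s') : G.ReachSet s ⊆ G.ReachSet s' := by
  rintro x ⟨t, ht, hp⟩
  exact ⟨t, h ht, hp⟩

lemma reach_union (s s' : Set G.V) :
    G.ReachSet (s ∪ s') = G.ReachSet s ∪ G.ReachSet s' := by
  ext x
  constructor
  · rintro ⟨t, ht | ht, hp⟩
    · exact Or.inl ⟨t, ht, hp⟩
    · exact Or.inr ⟨t, ht, hp⟩
  · rintro (⟨t, ht, hp⟩ | ⟨t, ht, hp⟩)
    · exact ⟨t, Or.inl ht, hp⟩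
    · exact ⟨t, Or.inr ht, hp⟩

lemma closed_tg {U : Set G.V} (hU : ∀ a b, G.edge a b → b ∈ U → a ∈ U)
    {a b : G.V} (h : TransGen G.edge a b) (hb : b ∈ U) : a ∈ U := by
  induction h with
  | single e => exact hU _ _ e hb
  | tail h e ih => exact ih (hU _ _ e hb)

lemma tg_lift {U : Set G.V} (hU : ∀ a b, G.edge a b → b ∈ U → a ∈ U)
    {a b : G.V} (h : TransGen G.edge a b) :
    ∀ (ha : a ∈ U) (hb : b ∈ U), TransGen (G.induce U).edge ⟨a, ha⟩ ⟨b, hb⟩ := by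
  induction h with
  | single e => intro ha hb; exact TransGen.single e
  | tail h e ih => intro ha hb; exact (ih ha (hU _ _ e hb)).tail e

lemma tg_drop (U : Set G.V) {a b : (G.induce U).V}
    (h : TransGen (G.induce U).edge a b) : TransGen G.edge a.1 b.1 :=
  TransGen.lift Subtype.val (fun _ _ e => e) a b h

lemma vcount_induce {U : Set G.V} (hU : ∀ a b, G.edge a b → b ∈ U → a ∈ U)
    (i : Fin n) (v : (G.induce U).V) :
    vcount S (G.induce U) i v = vcount S G i v.1 := by
  unfold LGraph.vcount
  apply Finset.card_bij (fun (w : (G.induce U).V) _ => w.1)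
  · intro a ha
    simp only [Finset.mem_filter, Finset.mem_univ, true_and] at ha ⊢
    exact ⟨ha.1, tg_drop U ha.2⟩
  · intro a _ b _ h
    exact Subtype.ext h
  · intro b hb
    simp only [Finset.mem_filter, Finset.mem_univ, true_and] at hb
    have hbU : b ∈ U := closed_tg hU hb.2 v.2
    refine ⟨⟨b, hbU⟩, ?_, rfl⟩
    refine Finset.mem_filter.2 ⟨Finset.mem_univ _, ?_⟩
    exact ⟨hb.1, tg_lift hU hb.2 hbU v.2⟩

lemma wdag_induce (hG : G.IsWDag S) (U : Set G.V) : (G.induce U).IsWDag S :=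
  ⟨fun v h => hG.1 v.1 (tg_drop U h),
   fun v w e => hG.2.1 v.1 w.1 e,
   fun v w hne hd => hG.2.2 v.1 w.1 (fun h => hne (Subtype.ext h)) hd⟩

lemma compat_induce {Vl : Type} {Ev : E → (Fin n → Vl) → Prop} {R : Fin n → ℕ → Vl}
    {U : Set G.V} (hU : ∀ a b, G.edge a b → b ∈ U → a ∈ U)
    (hc : LGraph.Compat S Ev G R) : LGraph.Compat S Ev (G.induce U) R := by
  intro v
  have := hc v.1
  have hfun : (fun i => R i (vcount S (G.induce U) i v)) =
      (fun i => R i (vcount S G i v.1)) := by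
    funext i; rw [vcount_induce hU]
  rw [show (G.induce U).label v = G.label v.1 from rfl, hfun]
  exact this

lemma card_induce (s : Set G.V) : Fintype.card (G.induce s).V = s.ncard := by
  have h1 : Nat.card (G.induce s).V = Fintype.card (G.induce s).V :=
    Nat.card_eq_fintype_card
  rw [← h1]
  exact Nat.card_coe_set_eq s

lemma sink_mem {T : Set G.V} {v : (G.induce (G.ReachSet T)).V}
    (hv : (G.induce (G.ReachSet T)).IsSink v) : v.1 ∈ T := by
  obtain ⟨t, ht, hp⟩ := v.2
  rcases hp.cases_head with h | ⟨c, e, hp'⟩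
  · rwa [h]
  · exact absurd e (hv ⟨c, ⟨t, ht, hp'⟩⟩)

lemma inc (K : ℕ) (hK : 0 < K) (T : Finset G.V)
    (hsmall : ∀ t ∈ T, (G.ReachSet {t}).ncard < K)
    (hbig : K ≤ (G.ReachSet ↑T).ncard) :
    ∃ T' : Finset G.V, T' ⊆ T ∧ K ≤ (G.ReachSet ↑T').ncard ∧
      (G.ReachSet ↑T').ncard ≤ 2 * K := by
  induction T using Finset.strongInduction with
  | _ T ih =>
    by_cases h2 : (G.ReachSet ↑T).ncard ≤ 2 * K
    · exact ⟨T, subset_rfl, hbig, h2⟩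
    · have hTne : T.Nonempty := by
        rcases T.eq_empty_or_nonempty with h | h
        · exfalso
          have : G.ReachSet (↑T : Set G.V) = ∅ := by
            subst h
            ext x
            simp only [Set.mem_empty_iff_false, iff_false]
            rintro ⟨t, ht, -⟩
            simp at ht
          rw [this, Set.ncard_empty] at hbig
          omega
        · exact h
      obtain ⟨t, ht⟩ := hTne
      have hsub : G.ReachSet ↑T ⊆ G.ReachSet ↑(T.erase t) ∪ G.ReachSet {t} := by
        rw [← reach_union]
        apply reach_mono
        intro x hx
        simp only [Finset.coe_erase, Set.union_singleton, Set.mem_insert_iff,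
          Set.mem_diff, Set.mem_singleton_iff] at hx ⊢
        by_cases hxt : x = t
        · exact Or.inl hxt
        · exact Or.inr ⟨hx, hxt⟩
      have hle := Set.ncard_le_ncard hsub (Set.toFinite _)
      have hun := Set.ncard_union_le (G.ReachSet (↑(T.erase t) : Set G.V))
        (G.ReachSet {t})
      have hts := hsmall t ht
      have hK' : K ≤ (G.ReachSet ↑(T.erase t)).ncard := by omega
      obtain ⟨T', h1, h2', h3⟩ := ih (T.erase t) (T.erase_ssubset ht)
        (fun u hu => hsmall u (Finset.mem_of_mem_erase hu)) hK'
      exact ⟨T', h1.trans (T.erase_subset t), h2', h3⟩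

lemma exists_sink (hG : G.IsWDag S) (v : G.V) :
    ∃ s, G.IsSink s ∧ ReflTransGen G.edge v s := by
  classical
  set A : Finset G.V := Finset.univ.filter (fun u => ReflTransGen G.edge v u) with hA
  have hvA : v ∈ A := by simp [hA, ReflTransGen.refl]
  obtain ⟨u, huA, humin⟩ := A.exists_min_image
    (fun u => (Finset.univ.filter (fun x => TransGen G.edge u x)).card) ⟨v, hvA⟩
  refine ⟨u, ?_, by simpa [hA] using huA⟩
  intro w hw
  have hwA : w ∈ A := by
    simp only [hA, Finset.mem_filter, Finset.mem_univ, true_and] at huA ⊢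
    exact huA.tail hw
  have hss : (Finset.univ.filter (fun x => TransGen G.edge w x)) ⊂
      (Finset.univ.filter (fun x => TransGen G.edge u x)) := by
    constructor
    · intro x hx
      simp only [Finset.mem_filter, Finset.mem_univ, true_and] at hx ⊢
      exact TransGen.head hw hx
    · intro hcon
      have hwmem : w ∈ (Finset.univ.filter (fun x => TransGen G.edge u x)) := by
        simp only [Finset.mem_filter, Finset.mem_univ, true_and]
        exact TransGen.single hw
      have := hcon hwmem
      simp only [Finset.mem_filter, Finset.mem_univ, true_and] at this
      exact hG.1 w this
  exact absurd (humin w hwA) (not_le.mpr (Finset.card_lt_card hss))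

lemma label_nonempty (hG : G.IsWDag S) (hcol : LGraph.Collectible S G) (v : G.V) :
    (S (G.label v)).Nonempty := by
  by_cases hs : G.IsSink v
  · obtain ⟨b, hb⟩ := hcol
    obtain ⟨i, hi⟩ := hb v hs
    exact ⟨i, (Finset.mem_inter.1 hi).2⟩
  · unfold LGraph.IsSink at hs
    push_neg at hs
    obtain ⟨w, hw⟩ := hs
    obtain ⟨i, hi⟩ := hG.2.1 v w hw
    exact ⟨i, (Finset.mem_inter.1 hi).1⟩

end Aux



/-- If there is a collectible witness DAG compatible with R with
at least K nodes, then there is a collectible witness DAG compatible with R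
with between K and 2K nodes. -/
theorem stmt12 {n : ℕ} {E Vl : Type} (S : E → Finset (Fin n))
    (Ev : E → (Fin n → Vl) → Prop)
    (hEvdep : ∀ b (x y : Fin n → Vl), (∀ i ∈ S b, x i = y i) → (Ev b x ↔ Ev b y))
    (R : Fin n → ℕ → Vl) (K : ℕ) (hK : 0 < K)
    (G : LGraph E) (hG : G.IsWDag S) (hcol : LGraph.Collectible S G)
    (hcomp : LGraph.Compat S Ev G R) (hsz : K ≤ Fintype.card G.V) :
    ∃ G' : LGraph E, G'.IsWDag S ∧ LGraph.Collectible S G' ∧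
      LGraph.Compat S Ev G' R ∧
      K ≤ Fintype.card G'.V ∧ Fintype.card G'.V ≤ 2 * K := by
  classical
  by_cases hbig : ∃ v : G.V, K ≤ (G.ReachSet {v}).ncard
  · -- Case: some single-vertex reach set already has ≥ K vertices.
    set F : Finset G.V := Finset.univ.filter (fun v => K ≤ (G.ReachSet {v}).ncard)
      with hF
    have hFne : F.Nonempty := by
      obtain ⟨v, hv⟩ := hbig
      exact ⟨v, by simp [hF, hv]⟩
    obtain ⟨v, hvF, hvmin⟩ := F.exists_min_image (fun v => (G.ReachSet {v}).ncard) hFne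
    have hvK : K ≤ (G.ReachSet {v}).ncard := by
      simpa [hF] using hvF
    have hSv : (S (G.label v)).Nonempty := label_nonempty hG hcol v
    by_cases h2 : (G.ReachSet {v}).ncard ≤ 2 * K
    · refine ⟨G.induce (G.ReachSet {v}), wdag_induce hG _, ?_,
        compat_induce (fun a b e hb => reach_closed _ e hb) hcomp,
        by rwa [card_induce], by rwa [card_induce]⟩
      refine ⟨G.label v, fun w hw => ?_⟩
      have hmem : w.1 ∈ ({v} : Set G.V) := sink_mem hw
      have hl : (G.induce (G.ReachSet {v})).label w = G.label v := by
        rw [show (G.induce (G.ReachSet {v})).label w = G.label w.1 from rfl,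
          Set.mem_singleton_iff.mp hmem]
      rw [hl]
      exact ⟨hSv.choose, Finset.mem_inter.2 ⟨hSv.choose_spec, hSv.choose_spec⟩⟩
    · -- |G(v)| > 2K : pass to the in-neighbours of v.
      set T : Finset G.V := Finset.univ.filter (fun w => G.edge w v) with hT
      have hTsmall : ∀ t ∈ T, (G.ReachSet {t}).ncard < K := by
        intro t ht
        have he : G.edge t v := by simpa [hT] using ht
        have hssub : G.ReachSet {t} ⊂ G.ReachSet {v} := by
          constructor
          · rintro x ⟨t', ht', hp⟩
            rw [Set.mem_singleton_iff] at ht'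
            subst ht'
            exact ⟨v, rfl, hp.tail he⟩
          · intro hcon
            have hv1 : v ∈ G.ReachSet ({v} : Set G.V) := mem_reach_self rfl
            have hv2 := hcon hv1
            obtain ⟨t', ht', hp⟩ := hv2
            rw [Set.mem_singleton_iff] at ht'
            subst ht'
            rcases hp.cases_head with h | ⟨c, e, hp'⟩
            · subst h
              exact hG.1 v (Relation.TransGen.single he)
            · exact hG.1 v (Relation.TransGen.head' e (hp'.tail he))
        have hlt : (G.ReachSet {t}).ncard < (G.ReachSet {v}).ncard :=
          Set.ncard_lt_ncard hssub (Set.toFinite _)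
        by_contra hc
        push_neg at hc
        have htF : t ∈ F := by simp [hF, hc]
        exact absurd (hvmin t htF) (not_le.mpr hlt)
      have hTbig : K ≤ (G.ReachSet ↑T).ncard := by
        have hsub2 : G.ReachSet {v} ⊆ G.ReachSet ↑T ∪ {v} := by
          rintro x ⟨t', ht', hp⟩
          rw [Set.mem_singleton_iff] at ht'
          subst ht'
          cases hp with
          | refl => exact Or.inr rfl
          | tail hp' e =>
            refine Or.inl ⟨_, ?_, hp'⟩
            rw [Finset.mem_coe]
            simp only [hT, Finset.mem_filter, Finset.mem_univ, true_and]
            exact e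
        have hle := Set.ncard_le_ncard hsub2 (Set.toFinite _)
        have hun := Set.ncard_union_le (G.ReachSet (↑T : Set G.V)) ({v} : Set G.V)
        have hsing : ({v} : Set G.V).ncard = 1 := Set.ncard_singleton v
        omega
      obtain ⟨T', hsub, h1', h2'⟩ := inc K hK T hTsmall hTbig
      refine ⟨G.induce (G.ReachSet ↑T'), wdag_induce hG _, ?_,
        compat_induce (fun a b e hb => reach_closed _ e hb) hcomp,
        by rwa [card_induce], by rwa [card_induce]⟩
      refine ⟨G.label v, fun w hw => ?_⟩
      have hmem : w.1 ∈ (↑T' : Set G.V) := sink_mem hw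
      have he : G.edge w.1 v := by
        have := hsub hmem
        simpa [hT] using this
      obtain ⟨i, hi⟩ := hG.2.1 w.1 v he
      rw [Finset.mem_inter] at hi
      exact ⟨i, Finset.mem_inter.2 ⟨hi.2, hi.1⟩⟩
  · -- Case: every single-vertex reach set has < K vertices; use the sinks.
    push_neg at hbig
    set T : Finset G.V := Finset.univ.filter (fun v => G.IsSink v) with hT
    have hreachT : G.ReachSet ↑T = Set.univ := by
      ext u
      simp only [Set.mem_univ, iff_true]
      obtain ⟨s, hs1, hs2⟩ := exists_sink hG u
      exact ⟨s, by simp [hT, hs1], hs2⟩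
    have hcardT : K ≤ (G.ReachSet ↑T).ncard := by
      rw [hreachT, Set.ncard_univ, Nat.card_eq_fintype_card]
      exact hsz
    obtain ⟨T', hsub, h1', h2'⟩ := inc K hK T (fun t _ => hbig t) hcardT
    refine ⟨G.induce (G.ReachSet ↑T'), wdag_induce hG _, ?_,
      compat_induce (fun a b e hb => reach_closed _ e hb) hcomp,
      by rwa [card_induce], by rwa [card_induce]⟩
    obtain ⟨b, hb⟩ := hcol
    refine ⟨b, fun w hw => ?_⟩
    have hmem : w.1 ∈ (↑T' : Set G.V) := sink_mem hw
    have hsink : G.IsSink w.1 := by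
      have := hsub hmem
      simpa [hT] using this
    exact hb w.1 hsink

end LLL
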